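/- arXiv:1907.00615 — 9 statements merged into one kernel-verified Lean document; each statement's English description precedes it below -/
import Mathlib

section
/- Every compact semigroup contains a minimal idempotent. That is, if K is a nonempty compact Hausdorff topological space equipped with an associative multiplication such that for every b ∈ K the map a ↦ a·b is continuous, then there exists an idempotent e ∈ K (i.e. e·e = e) such that every idempotent f ∈ K satisfying f·e = e·f = f is equal to e. -/
/-- **Ellis' lemma.** Every compact semigroup (a nonempty compact Hausdorff space with an
associative multiplication which is continuous in the left variable) contains a minimal
idempotent: an element `e` with `e·e = e` such that every idempotent `f` satisfying
`f·e = e·f = f` equals `e`. -/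
theorem compact_semigroup_exists_minimal_idempotent
    {K : Type*} [TopologicalSpace K] [CompactSpace K] [T2Space K] [Nonempty K]
    (mul : K → K → K)
    (hassoc : ∀ a b c : K, mul (mul a b) c = mul a (mul b c))
    (hcont : ∀ b : K, Continuous fun a => mul a b) :
    ∃ e : K, mul e e = e ∧
      ∀ f : K, mul f f = f → mul f e = f → mul e f = f → f = e := by
  letI : Mul K := ⟨mul⟩
  letI : Semigroup K := ⟨hassoc⟩
  have hcont' : ∀ b : K, Continuous (· * b) := hcont
  have hassoc' : ∀ a b c : K, a * b * c = a * (b * c) := hassoc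
  -- the family of nonempty compact left ideals
  set S : Set (Set K) := {L | L.Nonempty ∧ IsCompact L ∧ ∀ a : K, ∀ b ∈ L, a * b ∈ L} with hS
  obtain ⟨a⟩ := ‹Nonempty K›
  have hKa : (· * a) '' Set.univ ∈ S := by
    refine ⟨⟨a * a, a, trivial, rfl⟩, isCompact_univ.image (hcont' a), ?_⟩
    rintro c _ ⟨x, -, rfl⟩
    refine ⟨c * x, trivial, ?_⟩
    show c * x * a = c * (x * a)
    exact hassoc' c x a
  obtain ⟨L, -, hLS, hLmin⟩ := zorn_superset_nonempty S
    (fun c hcS hchain hcne => by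
      haveI : Nonempty c := hcne.to_subtype
      refine ⟨⋂₀ c, ⟨?_, ?_, ?_⟩, fun s hs => Set.sInter_subset_of_mem hs⟩
      · exact IsCompact.nonempty_sInter_of_directed_nonempty_isCompact_isClosed
          (fun s hs t ht => (hchain.total hs ht).elim
            (fun h => ⟨s, hs, subset_rfl, h⟩) (fun h => ⟨t, ht, h, subset_rfl⟩)) (fun s hs => (hcS hs).1) (fun s hs => (hcS hs).2.1)
          (fun s hs => (hcS hs).2.1.isClosed)
      · exact IsCompact.of_isClosed_subset (hcS hcne.choose_spec).2.1
          (isClosed_sInter (fun s hs => (hcS hs).2.1.isClosed))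
          (Set.sInter_subset_of_mem hcne.choose_spec)
      · intro x b hb
        exact Set.mem_sInter.2 fun s hs => (hcS hs).2.2 x b (Set.mem_sInter.1 hb s hs))
    _ hKa
  obtain ⟨hLne, hLcomp, hLideal⟩ := hLS
  obtain ⟨e, heL, he⟩ := exists_idempotent_in_compact_subsemigroup hcont' L hLne hLcomp
    (fun x hx y hy => hLideal x y hy)
  refine ⟨e, he, fun f hff hfe hef => ?_⟩
  have hfL : f ∈ L := hfe ▸ hLideal f e heL
  have hsub : (· * f) '' Set.univ ⊆ L := by
    rintro c ⟨x, -, rfl⟩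
    exact hLideal x f hfL
  have hmemS : (· * f) '' Set.univ ∈ S := by
    refine ⟨⟨f, f, trivial, hff⟩, isCompact_univ.image (hcont' f), ?_⟩
    rintro c _ ⟨x, -, rfl⟩
    refine ⟨c * x, trivial, ?_⟩
    show c * x * f = c * (x * f)
    exact hassoc' c x f
  have hEq : (· * f) '' Set.univ = L := subset_antisymm hsub (hLmin hmemS hsub)
  have heL' : e ∈ (· * f) '' Set.univ := hEq ▸ heL
  obtain ⟨x, -, hx⟩ := heL'
  have hx' : x * f = e := hx
  have hff' : f * f = f := hff
  have hef' : e * f = f := hef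
  have hef'' : e * f = e := by rw [← hx', hassoc' x f f, hff']
  exact hef'.symm.trans hef''
end

section
/- Let K be a compact convex semigroup, i.e. a nonempty compact convex subset of a Hausdorff locally convex real topological vector space, equipped with an associative multiplication such that for every fixed b ∈ K the map a ↦ a·b is continuous and affine. If e ∈ K is a minimal idempotent, then e·x·e = e for every x ∈ K. -/
open Filter Topology

lemma aux_smul_tendsto_zero {E : Type*} [AddCommGroup E] [Module ℝ E]
    [TopologicalSpace E] [IsTopologicalAddGroup E] [ContinuousSMul ℝ E]
    {S : Set E} (hS : IsCompact S) {y : ℕ → E} (hy : ∀ n, y n ∈ S)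
    {t : ℕ → ℝ} (ht : Tendsto t atTop (𝓝 0)) :
    Tendsto (fun n => t n • y n) atTop (𝓝 0) := by
  rw [Filter.tendsto_def]
  intro U hU
  have key : ∀ z : E, ∃ (V : Set ℝ) (W : Set E), z ∈ S →
      (V ∈ 𝓝 (0:ℝ) ∧ W ∈ 𝓝 z ∧ ∀ c ∈ V, ∀ w ∈ W, c • w ∈ U) := by
    intro z
    by_cases hz : z ∈ S
    · have hc : ContinuousAt (fun p : ℝ × E => p.1 • p.2) ((0:ℝ), z) :=
        continuous_smul.continuousAt
      have hmem : (fun p : ℝ × E => p.1 • p.2) ⁻¹' U ∈ 𝓝 ((0:ℝ), z) := by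
        apply hc.preimage_mem_nhds
        simpa using hU
      rcases mem_nhds_prod_iff.1 hmem with ⟨V, hV, W, hW, hVW⟩
      exact ⟨V, W, fun _ => ⟨hV, hW, fun c hc' w hw => hVW (Set.mk_mem_prod hc' hw)⟩⟩
    · exact ⟨Set.univ, Set.univ, fun h => absurd h hz⟩
  choose V W hVW using key
  obtain ⟨F, hFS, hcov⟩ := hS.elim_nhds_subcover W (fun z hz => (hVW z hz).2.1)
  have hVmem : (⋂ z ∈ F, V z) ∈ 𝓝 (0:ℝ) :=
    (Filter.biInter_finset_mem F).2 fun z hz => (hVW z (hFS z hz)).1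
  have hev : ∀ᶠ n in atTop, t n ∈ ⋂ z ∈ F, V z := ht.eventually_mem hVmem
  filter_upwards [hev] with n hn
  obtain ⟨z, hzF, hyz⟩ := Set.mem_iUnion₂.1 (hcov (hy n))
  exact (hVW z (hFS z hzF)).2.2 (t n) (Set.mem_iInter₂.1 hn z hzF) (y n) hyz

lemma aux_exists_idempotent {E : Type*} [AddCommGroup E] [Module ℝ E]
    [TopologicalSpace E] [IsTopologicalAddGroup E] [ContinuousSMul ℝ E] [T2Space E]
    (mul : E → E → E) (C : Set E)
    (hne : C.Nonempty) (hcpt : IsCompact C) (hconv : Convex ℝ C)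
    (hmul : ∀ a ∈ C, ∀ b ∈ C, mul a b ∈ C)
    (hassoc : ∀ a ∈ C, ∀ b ∈ C, ∀ c ∈ C, mul (mul a b) c = mul a (mul b c))
    (hcont : ∀ b ∈ C, ContinuousOn (fun a => mul a b) C)
    (haffine : ∀ t ∈ Set.Icc (0:ℝ) 1, ∀ a ∈ C, ∀ a' ∈ C, ∀ b ∈ C,
      mul (t • a + (1 - t) • a') b = t • mul a b + (1 - t) • mul a' b) :
    ∃ s ∈ C, mul s s = s := by
  set 𝒮 : Set (Set E) :=
    {M | M ⊆ C ∧ M.Nonempty ∧ IsCompact M ∧ Convex ℝ M ∧ ∀ a ∈ M, ∀ b ∈ M, mul a b ∈ M}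
      with h𝒮
  have hC𝒮 : C ∈ 𝒮 := ⟨subset_rfl, hne, hcpt, hconv, hmul⟩
  obtain ⟨M, -, hMmin⟩ : ∃ M, M ⊆ C ∧ Minimal (· ∈ 𝒮) M := by
    apply zorn_superset_nonempty 𝒮 ?_ C hC𝒮
    intro c hc𝒮 hchain hcne
    refine ⟨⋂₀ c, ?_, fun s hs => Set.sInter_subset_of_mem hs⟩
    obtain ⟨s₀, hs₀⟩ := hcne
    have hclosed : ∀ s ∈ c, IsClosed s := fun s hs => (hc𝒮 hs).2.2.1.isClosed
    have hsub : ⋂₀ c ⊆ C := (Set.sInter_subset_of_mem hs₀).trans (hc𝒮 hs₀).1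
    have hnonempty : (⋂₀ c).Nonempty := by
      rw [Set.sInter_eq_iInter]
      haveI : Nonempty c := ⟨⟨s₀, hs₀⟩⟩
      apply IsCompact.nonempty_iInter_of_directed_nonempty_isCompact_isClosed
      · intro s t
        rcases hchain.total s.2 t.2 with h | h
        · exact ⟨s, subset_rfl, h⟩
        · exact ⟨t, h, subset_rfl⟩
      · exact fun s => (hc𝒮 s.2).2.1
      · exact fun s => (hc𝒮 s.2).2.2.1
      · exact fun s => hclosed s s.2
    have hcl : IsClosed (⋂₀ c) := isClosed_sInter hclosed
    refine ⟨hsub, hnonempty, (hc𝒮 hs₀).2.2.1.of_isClosed_subset hcl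
      (Set.sInter_subset_of_mem hs₀), ?_, ?_⟩
    · exact convex_sInter fun s hs => (hc𝒮 hs).2.2.2.1
    · intro a ha b hb
      rw [Set.mem_sInter] at *
      exact fun s hs => (hc𝒮 hs).2.2.2.2 a (ha s hs) b (hb s hs)
  obtain ⟨hMC, ⟨s, hsM⟩, hMcpt, hMconv, hMmul⟩ := hMmin.1
  have hsC : s ∈ C := hMC hsM
  -- the image M·s
  have himage : ∀ (N : Set E), N ∈ 𝒮 → N ⊆ M → N = M := fun N hN hNM =>
    subset_antisymm hNM (hMmin.2 hN hNM)

  have hMs : (fun a => mul a s) '' M ∈ 𝒮 := by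
    refine ⟨?_, ⟨mul s s, Set.mem_image_of_mem _ hsM⟩, ?_, ?_, ?_⟩
    · rintro _ ⟨a, haM, rfl⟩
      exact hMC (hMmul a haM s hsM)
    · exact hMcpt.image_of_continuousOn ((hcont s hsC).mono hMC)
    · rintro _ ⟨a, haM, rfl⟩ _ ⟨b, hbM, rfl⟩ t1 t2 ht1 ht2 hsum
      have ht2' : t2 = 1 - t1 := by linarith
      subst ht2'
      rw [← haffine t1 ⟨ht1, by linarith⟩ a (hMC haM) b (hMC hbM) s hsC]
      exact Set.mem_image_of_mem _ (hMconv haM hbM ht1 ht2 hsum)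
    · rintro _ ⟨a, haM, rfl⟩ _ ⟨b, hbM, rfl⟩
      have : mul (mul a s) (mul b s) = mul (mul (mul a s) b) s :=
        (hassoc (mul a s) (hMC (hMmul a haM s hsM)) b (hMC hbM) s hsC).symm
      rw [this]
      exact Set.mem_image_of_mem _ (hMmul _ (hMmul a haM s hsM) b hbM)
  have hMsM : (fun a => mul a s) '' M ⊆ M := by
    rintro _ ⟨a, haM, rfl⟩; exact hMmul a haM s hsM
  have hMseq : (fun a => mul a s) '' M = M := himage _ hMs hMsM
  obtain ⟨a₀, ha₀M, ha₀⟩ : ∃ a ∈ M, mul a s = s := by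
    have : s ∈ (fun a => mul a s) '' M := by rw [hMseq]; exact hsM
    rcases this with ⟨a, haM, ha⟩
    exact ⟨a, haM, ha⟩
  -- the stabilizer
  set N : Set E := {a ∈ M | mul a s = s} with hN
  have hN𝒮 : N ∈ 𝒮 := by
    refine ⟨fun a ha => hMC ha.1, ⟨a₀, ha₀M, ha₀⟩, ?_, ?_, ?_⟩
    · have hcl : IsClosed N := by
        have : N = M ∩ (fun a => mul a s) ⁻¹' {s} := by
          ext a; simp [hN]
        rw [this]
        exact ContinuousOn.preimage_isClosed_of_isClosed
          ((hcont s hsC).mono hMC) hMcpt.isClosed isClosed_singleton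
      exact hMcpt.of_isClosed_subset hcl fun a ha => ha.1
    · rintro a ⟨haM, ha⟩ b ⟨hbM, hb⟩ t1 t2 ht1 ht2 hsum
      have ht2' : t2 = 1 - t1 := by linarith
      subst ht2'
      refine ⟨hMconv haM hbM ht1 ht2 hsum, ?_⟩
      rw [haffine t1 ⟨ht1, by linarith⟩ a (hMC haM) b (hMC hbM) s hsC, ha, hb]
      exact Convex.combo_self hsum s
    · rintro a ⟨haM, ha⟩ b ⟨hbM, hb⟩
      refine ⟨hMmul a haM b hbM, ?_⟩
      rw [hassoc a (hMC haM) b (hMC hbM) s hsC, hb, ha]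
  have : N = M := himage _ hN𝒮 fun a ha => ha.1
  have hss : mul s s = s := by
    have hsN : s ∈ N := by rw [this]; exact hsM
    exact hsN.2
  exact ⟨s, hsC, hss⟩

/-- In a compact convex semigroup (a nonempty compact convex subset of a Hausdorff locally
convex real topological vector space, with an associative multiplication which is continuous
and affine in the left variable), if `e` is a minimal idempotent, then `e·x·e = e` for all
`x ∈ K`. -/
theorem compact_convex_semigroup_minimal_idempotent_absorbs
    {E : Type*} [AddCommGroup E] [Module ℝ E] [TopologicalSpace E]
    [IsTopologicalAddGroup E] [ContinuousSMul ℝ E] [T2Space E] [LocallyConvexSpace ℝ E]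
    (K : Set E) (hKcpt : IsCompact K) (hKconv : Convex ℝ K) (hKne : K.Nonempty)
    (mul : E → E → E)
    (hmem : ∀ a ∈ K, ∀ b ∈ K, mul a b ∈ K)
    (hassoc : ∀ a ∈ K, ∀ b ∈ K, ∀ c ∈ K, mul (mul a b) c = mul a (mul b c))
    (hcont : ∀ b ∈ K, ContinuousOn (fun a => mul a b) K)
    (haffine : ∀ t ∈ Set.Icc (0:ℝ) 1, ∀ a ∈ K, ∀ a' ∈ K, ∀ b ∈ K,
      mul (t • a + (1 - t) • a') b = t • mul a b + (1 - t) • mul a' b)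
    (e : E) (heK : e ∈ K) (he : mul e e = e)
    (hmin : ∀ f ∈ K, mul f f = f → mul f e = f → mul e f = f → f = e) :
    ∀ x ∈ K, mul (mul e x) e = e := by
  intro x hx
  set g := mul (mul e x) e with hgdef
  have hexK : mul e x ∈ K := hmem e heK x hx
  have hgK : g ∈ K := hmem _ hexK e heK
  have hge : mul g e = g := by
    rw [hgdef, hassoc (mul e x) hexK e heK e heK, he]
  have heg : mul e g = g := by
    have h1 : mul e (mul e x) = mul e x := by
      rw [← hassoc e heK e heK x hx, he]
    rw [hgdef, ← hassoc e heK (mul e x) hexK e heK, h1]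
  -- powers of g
  let pw : ℕ → E := fun n => Nat.rec g (fun _ a => mul a g) n
  have pw0 : pw 0 = g := rfl
  have pwsucc : ∀ n, pw (n + 1) = mul (pw n) g := fun n => rfl
  have hpwK : ∀ n, pw n ∈ K := by
    intro n; induction n with
    | zero => exact hgK
    | succ n ih => rw [pwsucc]; exact hmem _ ih g hgK
  have hpwe : ∀ n, mul (pw n) e = pw n := by
    intro n; induction n with
    | zero => exact hge
    | succ n ih => rw [pwsucc, hassoc _ (hpwK n) g hgK e heK, hge]
  -- Cesàro averages
  let A : ℕ → E := fun n =>
    Nat.rec g (fun n a => (((n:ℝ)+1)/((n:ℝ)+2)) • a + (1 - ((n:ℝ)+1)/((n:ℝ)+2)) • pw (n+1)) n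
  have A0 : A 0 = g := rfl
  have Asucc : ∀ n, A (n+1)
      = (((n:ℝ)+1)/((n:ℝ)+2)) • A n + (1 - ((n:ℝ)+1)/((n:ℝ)+2)) • pw (n+1) := fun n => rfl
  have htmem : ∀ n : ℕ, ((n:ℝ)+1)/((n:ℝ)+2) ∈ Set.Icc (0:ℝ) 1 := by
    intro n
    constructor
    · positivity
    · rw [div_le_one (by positivity)]; linarith
  have hAK : ∀ n, A n ∈ K := by
    intro n; induction n with
    | zero => exact hgK
    | succ n ih =>
      rw [Asucc]
      exact hKconv ih (hpwK (n+1)) (htmem n).1 (by linarith [(htmem n).2]) (by ring)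
  have hAe : ∀ n, mul (A n) e = A n := by
    intro n; induction n with
    | zero => exact hge
    | succ n ih =>
      rw [Asucc, haffine _ (htmem n) _ (hAK n) _ (hpwK (n+1)) e heK, ih]
      have hh := hpwe (n+1)
      rw [hh]
  have hAg : ∀ n, mul (A n) g = A n + (1/((n:ℝ)+1)) • (pw (n+1) - g) := by
    intro n; induction n with
    | zero =>
      rw [A0, pwsucc, pw0]
      simp
    | succ n ih =>
      rw [Asucc, haffine _ (htmem n) _ (hAK n) _ (hpwK (n+1)) g hgK, ih]
      rw [← pwsucc (n+1)]
      have h2 : ((n:ℝ)+2) ≠ 0 := by positivity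
      have h1 : ((n:ℝ)+1) ≠ 0 := by positivity
      rw [smul_add, smul_smul, smul_sub, smul_sub]
      have hc : ((n:ℝ)+1)/((n:ℝ)+2) * (1/((n:ℝ)+1)) = 1/((n:ℝ)+2) := by
        field_simp
      rw [hc]
      have hpush : ((n:ℝ)+1+1) = ((n:ℝ)+2) := by ring
      push_cast
      rw [hpush]
      match_scalars <;> field_simp <;> ring
  -- cluster point of averages
  have hmapA : map A atTop ≤ 𝓟 K := by
    rw [le_principal_iff, mem_map]
    exact Filter.Eventually.of_forall hAK
  obtain ⟨p, hpK, hp⟩ := hKcpt.exists_clusterPt hmapA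
  -- p e = p
  have hFe : ∀ b ∈ K, IsClosed {a ∈ K | mul a b = a} := by
    intro b hb
    have : {a ∈ K | mul a b = a} = K ∩ (fun a => mul a b - a) ⁻¹' {0} := by
      ext a; simp [sub_eq_zero]
    rw [this]
    exact ContinuousOn.preimage_isClosed_of_isClosed
      ((hcont b hb).sub continuousOn_id) hKcpt.isClosed isClosed_singleton
  have hclosA : ∀ (s : Set E), IsClosed s → (∀ n, A n ∈ s) → p ∈ s := by
    intro s hs hAs
    have hmap : map A atTop ≤ 𝓟 s := by
      rw [le_principal_iff, mem_map]
      exact Filter.Eventually.of_forall hAs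
    have : ClusterPt p (𝓟 s) := hp.mono hmap
    exact hs.mem_of_nhdsWithin_neBot this
  have hpe : mul p e = p := (hclosA _ (hFe e heK) fun n => ⟨hAK n, hAe n⟩).2
  -- p g = p
  have hpg : mul p g = p := by
    set S : Set E := (fun q : E × E => q.1 - q.2) '' (K ×ˢ K) with hS
    have hScpt : IsCompact S := (hKcpt.prod hKcpt).image (continuous_fst.sub continuous_snd)
    have hyS : ∀ n, pw (n+1) - g ∈ S :=
      fun n => ⟨(pw (n+1), g), Set.mk_mem_prod (hpwK (n+1)) hgK, rfl⟩
    have ht0 : Tendsto (fun n : ℕ => 1/((n:ℝ)+1)) atTop (𝓝 0) :=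
      tendsto_one_div_add_atTop_nhds_zero_nat
    have hφ0 : Tendsto (fun n => mul (A n) g - A n) atTop (𝓝 0) := by
      have := aux_smul_tendsto_zero hScpt hyS ht0
      refine this.congr fun n => ?_
      rw [hAg n]; abel
    have hcw : ContinuousWithinAt (fun a => mul a g - a) K p :=
      ((hcont g hgK).sub continuousOn_id) p hpK
    set F : Filter E := 𝓝 p ⊓ map A atTop with hF
    haveI : F.NeBot := hp
    have hFle : F ≤ 𝓝[K] p := le_inf (inf_le_left) (le_trans inf_le_right hmapA)
    have h1 : Tendsto (fun a => mul a g - a) F (𝓝 (mul p g - p)) := hcw.mono_left hFle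
    have h2 : Tendsto (fun a => mul a g - a) F (𝓝 0) := by
      have : map (fun a => mul a g - a) F ≤ map (fun a => mul a g - a) (map A atTop) :=
        map_mono inf_le_right
      rw [Filter.map_map] at this
      exact le_trans this hφ0
    have := tendsto_nhds_unique h1 h2
    exact sub_eq_zero.1 this
  -- the compact convex subsemigroup of elements fixed by right mult by e and g
  set C : Set E := {a ∈ K | mul a e = a ∧ mul a g = a} with hC
  have hCK : C ⊆ K := fun a ha => ha.1
  have hCcl : IsClosed C := by
    have : C = {a ∈ K | mul a e = a} ∩ {a ∈ K | mul a g = a} := by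
      ext a
      constructor
      · rintro ⟨h1, h2, h3⟩; exact ⟨⟨h1, h2⟩, h1, h3⟩
      · rintro ⟨⟨h1, h2⟩, -, h3⟩; exact ⟨h1, h2, h3⟩
    rw [this]
    exact (hFe e heK).inter (hFe g hgK)
  have hCne : C.Nonempty := ⟨p, hpK, hpe, hpg⟩
  have hCcpt : IsCompact C := hKcpt.of_isClosed_subset hCcl hCK
  have hCconv : Convex ℝ C := by
    rintro a ⟨haK, hae, hag⟩ b ⟨hbK, hbe, hbg⟩ t1 t2 ht1 ht2 hsum
    have ht2' : t2 = 1 - t1 := by linarith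
    subst ht2'
    refine ⟨hKconv haK hbK ht1 ht2 hsum, ?_, ?_⟩
    · rw [haffine t1 ⟨ht1, by linarith⟩ a haK b hbK e heK, hae, hbe]
    · rw [haffine t1 ⟨ht1, by linarith⟩ a haK b hbK g hgK, hag, hbg]
  have hCmul : ∀ a ∈ C, ∀ b ∈ C, mul a b ∈ C := by
    rintro a ⟨haK, hae, hag⟩ b ⟨hbK, hbe, hbg⟩
    exact ⟨hmem a haK b hbK,
      by rw [hassoc a haK b hbK e heK, hbe],
      by rw [hassoc a haK b hbK g hgK, hbg]⟩
  obtain ⟨s, hsC, hss⟩ := aux_exists_idempotent mul C hCne hCcpt hCconv hCmul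
    (fun a ha b hb c hc => hassoc a (hCK ha) b (hCK hb) c (hCK hc))
    (fun b hb => (hcont b (hCK hb)).mono hCK)
    (fun t ht a ha a' ha' b hb => haffine t ht a (hCK ha) a' (hCK ha') b (hCK hb))
  obtain ⟨hsK, hse, hsg⟩ := hsC
  -- q = e * s is an idempotent below e
  have hqK : mul e s ∈ K := hmem e heK s hsK
  have hqq : mul (mul e s) (mul e s) = mul e s := by
    rw [hassoc e heK s hsK (mul e s) hqK, ← hassoc s hsK e heK s hsK, hse, hss]
  have hqe : mul (mul e s) e = mul e s := by
    rw [hassoc e heK s hsK e heK, hse]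
  have heq : mul e (mul e s) = mul e s := by
    rw [← hassoc e heK e heK s hsK, he]
  have hes : mul e s = e := hmin (mul e s) hqK hqq hqe heq
  -- conclude: e = e s = e (s g) = (e s) g = e g = g
  calc mul (mul e x) e = g := rfl
    _ = mul e g := heg.symm
    _ = mul (mul e s) g := by rw [hes]
    _ = mul e (mul s g) := hassoc e heK s hsK g hgK
    _ = mul e s := by rw [hsg]
    _ = e := hes
end

section
/- Let K be a compact convex semigroup and let e ∈ K be a minimal idempotent. Then for every a in the closed left ideal I = K·e = {b·e : b ∈ K} and every x ∈ K, one has a·x·e = a. -/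
/-- In a compact convex semigroup, if `e` is a minimal idempotent, then for every `a` in the
closed left ideal `I = K·e` and every `x ∈ K` one has `a·x·e = a`. -/
theorem compact_convex_semigroup_left_ideal_absorbs
    {E : Type*} [AddCommGroup E] [Module ℝ E] [TopologicalSpace E]
    [IsTopologicalAddGroup E] [ContinuousSMul ℝ E] [T2Space E] [LocallyConvexSpace ℝ E]
    (K : Set E) (hKcpt : IsCompact K) (hKconv : Convex ℝ K) (hKne : K.Nonempty)
    (mul : E → E → E)
    (hmem : ∀ a ∈ K, ∀ b ∈ K, mul a b ∈ K)
    (hassoc : ∀ a ∈ K, ∀ b ∈ K, ∀ c ∈ K, mul (mul a b) c = mul a (mul b c))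
    (hcont : ∀ b ∈ K, ContinuousOn (fun a => mul a b) K)
    (haffine : ∀ t ∈ Set.Icc (0:ℝ) 1, ∀ a ∈ K, ∀ a' ∈ K, ∀ b ∈ K,
      mul (t • a + (1 - t) • a') b = t • mul a b + (1 - t) • mul a' b)
    (e : E) (heK : e ∈ K) (he : mul e e = e)
    (hmin : ∀ f ∈ K, mul f f = f → mul f e = f → mul e f = f → f = e) :
    ∀ a, (∃ b ∈ K, mul b e = a) → ∀ x ∈ K, mul (mul a x) e = a := by
  intro a ha x hxK
  obtain ⟨b, hbK, rfl⟩ := ha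
  set u := mul x e with hu
  have huK : u ∈ K := hmem x hxK e heK
  -- It suffices to show `e·u = e` where `u = x·e`.
  suffices h : mul e u = e by
    rw [hassoc b hbK e heK x hxK,
        hassoc b hbK (mul e x) (hmem e heK x hxK) e heK,
        hassoc e heK x hxK e heK, ← hu, h]
  -- The left ideal `I = K·e`.
  set I : Set E := (fun c => mul c e) '' K with hI
  have hIsub : I ⊆ K := by
    rintro _ ⟨c, hc, rfl⟩; exact hmem c hc e heK
  have hIe : ∀ c ∈ I, mul c e = c := by
    rintro _ ⟨c, hc, rfl⟩
    rw [hassoc c hc e heK e heK, he]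
  have hIcpt : IsCompact I := hKcpt.image_of_continuousOn (hcont e heK)
  have heI : e ∈ I := ⟨e, heK, he⟩
  have hIconv : Convex ℝ I := by
    rintro _ ⟨c, hc, rfl⟩ _ ⟨d, hd, rfl⟩ s t hs ht hst
    refine ⟨s • c + t • d, hKconv hc hd hs ht hst, ?_⟩
    have htt : t = 1 - s := by linarith
    subst htt
    exact haffine s ⟨hs, by linarith⟩ c hc d hd e heK
  -- right translation by `u` maps `K` into `I`
  have hTmem : ∀ c ∈ K, mul c u ∈ I := by
    intro c hc
    exact ⟨mul c x, hmem c hc x hxK, hassoc c hc x hxK e heK⟩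
  -- Step A (Markov–Kakutani by hand): find `w ∈ I` with `w·u = w`.
  set T : E → E := fun c => mul c u with hT
  have hiterI : ∀ n : ℕ, T^[n] e ∈ I := by
    intro n
    induction n with
    | zero => exact heI
    | succ n ih =>
      rw [Function.iterate_succ_apply']
      exact hTmem _ (hIsub ih)
  -- Cesàro averages of the orbit of `e` under `T`.
  set v : ℕ → E := fun n => Nat.rec e
    (fun k vk => (((k:ℝ)+1)/((k:ℝ)+2)) • vk
      + (1 - ((k:ℝ)+1)/((k:ℝ)+2)) • T^[k+1] e) n with hv
  have hv0 : v 0 = e := rfl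
  have hvs : ∀ n : ℕ, v (n+1) = (((n:ℝ)+1)/((n:ℝ)+2)) • v n
      + (1 - ((n:ℝ)+1)/((n:ℝ)+2)) • T^[n+1] e := fun n => rfl
  have hkey : ∀ n : ℕ, v n ∈ I ∧
      mul (v n) u = v n + ((n:ℝ)+1)⁻¹ • (T^[n+1] e - e) := by
    intro n
    induction n with
    | zero =>
      refine ⟨heI, ?_⟩
      have h1 : T^[0+1] e = mul e u := rfl
      rw [hv0, h1]
      simp
    | succ n ih =>
      obtain ⟨hvnI, hvn⟩ := ih
      have hc0 : (0:ℝ) ≤ ((n:ℝ)+1)/((n:ℝ)+2) := by positivity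
      have hc1 : ((n:ℝ)+1)/((n:ℝ)+2) ≤ 1 := by
        rw [div_le_one (by positivity)]; linarith
      have hmemI : v (n+1) ∈ I := by
        rw [hvs n]
        exact hIconv hvnI (hiterI (n+1)) hc0 (by linarith) (by ring)
      refine ⟨hmemI, ?_⟩
      push_cast
      have haff := haffine (((n:ℝ)+1)/((n:ℝ)+2)) ⟨hc0, hc1⟩
        (v n) (hIsub hvnI) (T^[n+1] e) (hIsub (hiterI (n+1))) u huK
      have hiter : mul (T^[n+1] e) u = T^[n+2] e :=
        (Function.iterate_succ_apply' T (n+1) e).symm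
      calc mul (v (n+1)) u
          = (((n:ℝ)+1)/((n:ℝ)+2)) • mul (v n) u
            + (1 - ((n:ℝ)+1)/((n:ℝ)+2)) • mul (T^[n+1] e) u := by
            rw [hvs n]; exact haff
        _ = v (n+1) + ((n:ℝ)+1+1)⁻¹ • (T^[n+1+1] e - e) := by
            rw [hvn, hiter, hvs n, show (n+1+1) = (n+2) from rfl]
            have h1 : ((n:ℝ)+1) ≠ 0 := by positivity
            have h2 : ((n:ℝ)+2) ≠ 0 := by positivity
            have h3 : ((n:ℝ)+1+1) = ((n:ℝ)+2) := by ring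
            rw [h3]
            match_scalars <;> field_simp <;> ring
  -- the defect tends to zero
  have hbd : Bornology.IsVonNBounded ℝ ((fun p => p - e) '' I) := by
    letI : UniformSpace E := IsTopologicalAddGroup.rightUniformSpace E
    haveI : IsUniformAddGroup E := isUniformAddGroup_of_addCommGroup
    exact (hIcpt.image (continuous_sub_right e)).totallyBounded.isVonNBounded ℝ
  have hεlim : Filter.Tendsto (fun n : ℕ => ((n:ℝ)+1)⁻¹) Filter.atTop (nhds 0) :=
    tendsto_inv_atTop_zero.comp
      (Filter.tendsto_atTop_add_const_right _ 1 tendsto_natCast_atTop_atTop)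
  have hdef : Filter.Tendsto (fun n : ℕ => ((n:ℝ)+1)⁻¹ • (T^[n+1] e - e))
      Filter.atTop (nhds 0) := by
    have := hbd.smul_tendsto_zero (x := fun n : ℕ => T^[n+1] e - e)
      (Filter.Eventually.of_forall fun n => ⟨T^[n+1] e, hiterI (n+1), rfl⟩) hεlim
    exact this
  -- cluster point of the averages
  have hvI : ∀ n, v n ∈ I := fun n => (hkey n).1
  have hmapP : Filter.map v Filter.atTop ≤ Filter.principal I :=
    Filter.le_principal_iff.mpr (Filter.eventually_map.mpr
      (Filter.Eventually.of_forall hvI))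
  obtain ⟨w, hwI, hclw⟩ := hIcpt hmapP
  have hwK : w ∈ K := hIsub hwI
  -- `w` is a fixed point of right translation by `u`
  have hwu : mul w u = w := by
    set F : Filter E := nhds w ⊓ Filter.map v Filter.atTop with hF
    haveI hFne : F.NeBot := hclw
    set g : E → E := fun c => mul c u - c with hg
    have hgcont : ContinuousOn g K := (hcont u huK).sub (continuousOn_id' K)
    have h1 : Filter.Tendsto g F (nhds (g w)) := by
      have hle : F ≤ nhdsWithin w K := by
        rw [nhdsWithin]
        exact inf_le_inf le_rfl (hmapP.trans (Filter.principal_mono.mpr hIsub))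
      exact (hgcont w hwK).mono_left hle
    have h2 : Filter.Tendsto g F (nhds 0) := by
      have hgv : Filter.Tendsto (g ∘ v) Filter.atTop (nhds 0) := by
        apply hdef.congr
        intro n
        simp only [Function.comp_apply, hg]
        rw [(hkey n).2]
        abel
      have : Filter.Tendsto g (Filter.map v Filter.atTop) (nhds 0) := by
        rwa [Filter.tendsto_map'_iff]
      exact this.mono_left inf_le_right
    have h3 : g w = 0 := tendsto_nhds_unique h1 h2
    have h4 : mul w u - w = 0 := h3
    exact sub_eq_zero.mp h4
  have hwe : mul w e = w := hIe w hwI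
  -- Step B (Ellis): find an idempotent in `F = {c ∈ K : c·e = c ∧ c·u = c}`.
  letI : Semigroup {c // c ∈ K} :=
    { mul := fun p q => ⟨mul p.1 q.1, hmem _ p.2 _ q.2⟩
      mul_assoc := fun p q r => Subtype.ext (hassoc _ p.2 _ q.2 _ r.2) }
  haveI : CompactSpace {c // c ∈ K} := isCompact_iff_compactSpace.mp hKcpt
  have hml : ∀ r : {c // c ∈ K}, Continuous (· * r) := by
    intro r
    have : Continuous (K.restrict (fun c => mul c r.1)) :=
      continuousOn_iff_continuous_restrict.mp (hcont r.1 r.2)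
    exact this.subtype_mk _
  obtain ⟨m, hms, hmm⟩ := exists_idempotent_in_compact_subsemigroup hml
    {p : {c // c ∈ K} | mul p.1 e = p.1 ∧ mul p.1 u = p.1}
    ⟨⟨w, hwK⟩, hwe, hwu⟩
    (by
      refine IsClosed.isCompact (IsClosed.inter ?_ ?_)
      · exact isClosed_eq (((continuousOn_iff_continuous_restrict.mp
          (hcont e heK))).congr (fun p => rfl)) continuous_subtype_val
      · exact isClosed_eq (((continuousOn_iff_continuous_restrict.mp
          (hcont u huK))).congr (fun p => rfl)) continuous_subtype_val)
    (by
      rintro p ⟨hpe, hpu⟩ q ⟨hqe, hqu⟩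
      constructor
      · show mul (mul p.1 q.1) e = mul p.1 q.1
        rw [hassoc _ p.2 _ q.2 e heK, hqe]
      · show mul (mul p.1 q.1) u = mul p.1 q.1
        rw [hassoc _ p.2 _ q.2 u huK, hqu])
  obtain ⟨hme, hmu⟩ := hms
  have hmm' : mul m.1 m.1 = m.1 := congrArg Subtype.val hmm
  have hmK : m.1 ∈ K := m.2
  -- Step C: `f = e·m` is an idempotent below `e`, hence equals `e`.
  have hfK : mul e m.1 ∈ K := hmem e heK m.1 hmK
  have hff : mul (mul e m.1) (mul e m.1) = mul e m.1 := by
    rw [hassoc e heK m.1 hmK (mul e m.1) hfK,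
        ← hassoc m.1 hmK e heK m.1 hmK, hme, hmm']
  have hfe : mul (mul e m.1) e = mul e m.1 := by
    rw [hassoc e heK m.1 hmK e heK, hme]
  have hef : mul e (mul e m.1) = mul e m.1 := by
    rw [← hassoc e heK e heK m.1 hmK, he]
  have hfeq : mul e m.1 = e := hmin _ hfK hff hfe hef
  -- conclude `e·u = e`
  calc mul e u = mul (mul e m.1) u := by rw [hfeq]
    _ = mul e (mul m.1 u) := hassoc e heK m.1 hmK u huK
    _ = mul e m.1 := by rw [hmu]
    _ = e := hfeq
end

section
/- Let K be a compact convex semigroup and let e, f ∈ K be two minimal idempotents. Then e·f·e = e and f·e·f = f. -/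
open Filter Topology

section Aux

variable {E : Type*} [AddCommGroup E] [Module ℝ E] [TopologicalSpace E]
    [IsTopologicalAddGroup E] [ContinuousSMul ℝ E] [T2Space E]

/-- Scalars tending to zero times a sequence living in a compact set tends to zero. -/
lemma my_smul_tendsto_zero {C : Set E} (hC : IsCompact C) {x : ℕ → E} (hx : ∀ n, x n ∈ C)
    {ε : ℕ → ℝ} (hε : Tendsto ε atTop (𝓝 0)) :
    Tendsto (fun n => ε n • x n) atTop (𝓝 (0 : E)) := by
  rw [tendsto_nhds]
  intro U hUopen hU0
  have hcont : Continuous fun p : ℝ × E => p.1 • p.2 := continuous_smul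
  have hopen : IsOpen ((fun p : ℝ × E => p.1 • p.2) ⁻¹' U) := hUopen.preimage hcont
  have hsub : ({0} : Set ℝ) ×ˢ C ⊆ (fun p : ℝ × E => p.1 • p.2) ⁻¹' U := by
    rintro ⟨t, y⟩ ⟨ht, _⟩
    have ht0 : t = 0 := ht
    simpa [ht0] using hU0
  obtain ⟨u, v, huo, _, h0u, hCv, huv⟩ :=
    generalized_tube_lemma isCompact_singleton hC hopen hsub
  have hev : ∀ᶠ n in atTop, ε n ∈ u := hε (huo.mem_nhds (h0u rfl))
  filter_upwards [hev] with n hn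
  exact huv (Set.mk_mem_prod hn (hCv (hx n)))

/-- Markov–Kakutani fixed point theorem for a single continuous affine self-map of a
nonempty compact convex set. -/
lemma my_fixed_point (K : Set E) (hKcpt : IsCompact K) (hKconv : Convex ℝ K)
    (hKne : K.Nonempty) (T : E → E) (hTK : ∀ x ∈ K, T x ∈ K) (hTc : ContinuousOn T K)
    (hTaff : ∀ t ∈ Set.Icc (0:ℝ) 1, ∀ a ∈ K, ∀ a' ∈ K,
      T (t • a + (1 - t) • a') = t • T a + (1 - t) • T a') :
    ∃ x ∈ K, T x = x := by
  obtain ⟨x₀, hx₀⟩ := hKne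
  set a : ℕ → E := fun n => T^[n] x₀ with ha_def
  have haS : ∀ n, a (n+1) = T (a n) := fun n => Function.iterate_succ_apply' T n x₀
  have haK : ∀ n, a n ∈ K := by
    intro n; induction n with
    | zero => simpa [ha_def] using hx₀
    | succ n ih => rw [haS]; exact hTK _ ih
  set c : ℕ → E := fun n => ((n : ℝ) + 1)⁻¹ • ∑ k ∈ Finset.range (n+1), a k with hc_def
  have hc0 : c 0 = a 0 := by simp [hc_def]
  have htmem : ∀ n : ℕ, ((n : ℝ) + 1) / ((n : ℝ) + 2) ∈ Set.Icc (0:ℝ) 1 := by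
    intro n
    constructor
    · positivity
    · rw [div_le_one (by positivity)]; linarith
  have hcrec : ∀ n, c (n+1) = (((n:ℝ)+1)/((n:ℝ)+2)) • c n
      + (1 - ((n:ℝ)+1)/((n:ℝ)+2)) • a (n+1) := by
    intro n
    have hS : ∑ k ∈ Finset.range (n+1+1), a k
        = (∑ k ∈ Finset.range (n+1), a k) + a (n+1) := Finset.sum_range_succ _ _
    rw [hc_def]
    simp only [hS]
    push_cast
    match_scalars <;> field_simp <;> ring
  have hcK : ∀ n, c n ∈ K := by
    intro n; induction n with
    | zero => rw [hc0]; exact haK 0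
    | succ n ih =>
        rw [hcrec n]
        have ht := htmem n
        exact hKconv ih (haK (n+1)) ht.1 (by linarith [ht.2]) (by ring)
  have hTcf : ∀ n, T (c n) = c n + ((n : ℝ) + 1)⁻¹ • (a (n+1) - a 0) := by
    intro n; induction n with
    | zero => rw [hc0, ← haS 0]; module
    | succ n ih =>
        have ht := htmem n
        rw [hcrec n, hTaff _ ht (c n) (hcK n) (a (n+1)) (haK (n+1)), ih, ← haS (n+1)]
        push_cast
        match_scalars <;> field_simp <;> ring
  -- the error term tends to zero
  have hCc : IsCompact ((fun p : E × E => p.1 - p.2) '' (K ×ˢ K)) :=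
    (hKcpt.prod hKcpt).image (continuous_fst.sub continuous_snd)
  have h1 : Tendsto (fun n : ℕ => (n : ℝ) + 1) atTop atTop :=
    tendsto_atTop_mono (fun n => by linarith [(Nat.cast_nonneg n : (0:ℝ) ≤ n)])
      (tendsto_natCast_atTop_atTop (R := ℝ))
  have hε : Tendsto (fun n : ℕ => ((n : ℝ) + 1)⁻¹) atTop (𝓝 0) := h1.inv_tendsto_atTop
  have hδ : Tendsto (fun n : ℕ => ((n : ℝ) + 1)⁻¹ • (a (n+1) - a 0)) atTop (𝓝 (0:E)) :=
    my_smul_tendsto_zero hCc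
      (fun n => ⟨(a (n+1), a 0), ⟨haK (n+1), haK 0⟩, rfl⟩) hε
  -- take a limit along an ultrafilter
  set U : Ultrafilter ℕ := Ultrafilter.of atTop with hU_def
  have hUle : (U : Filter ℕ) ≤ atTop := Ultrafilter.of_le _
  have hUK : (Ultrafilter.map c U : Filter E) ≤ 𝓟 K :=
    le_principal_iff.mpr (mem_map.mpr (univ_mem' hcK))
  obtain ⟨x, hxK, hxle⟩ := hKcpt.ultrafilter_le_nhds (Ultrafilter.map c U) hUK
  have hcx : Tendsto c (U : Filter ℕ) (𝓝 x) := hxle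
  have hcxK : Tendsto c (U : Filter ℕ) (𝓝[K] x) :=
    tendsto_nhdsWithin_of_tendsto_nhds_of_eventually_within c hcx
      (Eventually.of_forall hcK)
  have h1 : Tendsto (fun n => T (c n)) (U : Filter ℕ) (𝓝 (T x)) :=
    ((hTc x hxK).tendsto).comp hcxK
  have h2 : Tendsto (fun n => T (c n)) (U : Filter ℕ) (𝓝 (x + 0)) := by
    have := hcx.add (hδ.mono_left hUle)
    refine this.congr fun n => ?_
    rw [hTcf n]
  exact ⟨x, hxK, tendsto_nhds_unique h1 (by simpa using h2)⟩

/-- Ellis-type idempotent lemma for a compact set closed under an associative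
multiplication with continuous right translations. -/
lemma my_exists_idem {F : Type*} [TopologicalSpace F] [T2Space F]
    (S : Set F) (hS : IsCompact S) (hne : S.Nonempty)
    (mul : F → F → F) (hmemS : ∀ a ∈ S, ∀ b ∈ S, mul a b ∈ S)
    (hassocS : ∀ a ∈ S, ∀ b ∈ S, ∀ c ∈ S, mul (mul a b) c = mul a (mul b c))
    (hcontS : ∀ b ∈ S, ContinuousOn (fun a => mul a b) S) :
    ∃ w ∈ S, mul w w = w := by
  haveI : Nonempty S := hne.to_subtype
  haveI : CompactSpace S := isCompact_iff_compactSpace.mp hS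
  letI : Semigroup S :=
    { mul := fun a b => ⟨mul a b, hmemS _ a.2 _ b.2⟩
      mul_assoc := fun a b c => Subtype.ext (hassocS _ a.2 _ b.2 _ c.2) }
  have hcm : ∀ r : S, Continuous (· * r) := fun r =>
    Continuous.subtype_mk ((hcontS _ r.2).restrict) fun x => hmemS _ x.2 _ r.2
  obtain ⟨m, hm⟩ := exists_idempotent_of_compact_t2_of_continuous_mul_left hcm
  exact ⟨m.1, m.2, congrArg Subtype.val hm⟩

/-- Key step: if `e` is a minimal idempotent then `e·f·e = e` for every `f ∈ K`. -/
lemma my_main_aux (K : Set E) (hKcpt : IsCompact K) (hKconv : Convex ℝ K) (hKne : K.Nonempty)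
    (mul : E → E → E)
    (hmem : ∀ a ∈ K, ∀ b ∈ K, mul a b ∈ K)
    (hassoc : ∀ a ∈ K, ∀ b ∈ K, ∀ c ∈ K, mul (mul a b) c = mul a (mul b c))
    (hcont : ∀ b ∈ K, ContinuousOn (fun a => mul a b) K)
    (haffine : ∀ t ∈ Set.Icc (0:ℝ) 1, ∀ a ∈ K, ∀ a' ∈ K, ∀ b ∈ K,
      mul (t • a + (1 - t) • a') b = t • mul a b + (1 - t) • mul a' b)
    (e : E) (heK : e ∈ K) (he : mul e e = e)
    (hemin : ∀ g ∈ K, mul g g = g → mul g e = g → mul e g = g → g = e)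
    (f : E) (hfK : f ∈ K) :
    mul (mul e f) e = e := by
  have hbK : mul e f ∈ K := hmem e heK f hfK
  -- A fixed point of right translation by `e·f`
  obtain ⟨x₀, hx₀K, hx₀⟩ := my_fixed_point K hKcpt hKconv hKne (fun x => mul x (mul e f))
      (fun x hx => hmem x hx _ hbK) (hcont _ hbK)
      (fun t ht a ha a' ha' => haffine t ht a ha a' ha' _ hbK)
  set S : Set E := {x | x ∈ K ∧ mul x (mul e f) = x} with hS_def
  have hSsub : S ⊆ K := fun x hx => hx.1
  have hSne : S.Nonempty := ⟨x₀, hx₀K, hx₀⟩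
  have hScpt : IsCompact S := by
    haveI : CompactSpace K := isCompact_iff_compactSpace.mp hKcpt
    have h1 : Continuous (K.restrict fun a => mul a (mul e f)) := (hcont _ hbK).restrict
    have h2 : IsClosed {x : K | mul ↑x (mul e f) = ↑x} := isClosed_eq h1 continuous_subtype_val
    have h4 : S = Subtype.val '' {x : K | mul ↑x (mul e f) = ↑x} := by
      ext x
      constructor
      · rintro ⟨hxK, hxb⟩; exact ⟨⟨x, hxK⟩, hxb, rfl⟩
      · rintro ⟨⟨y, hyK⟩, hyb, rfl⟩; exact ⟨hyK, hyb⟩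
    rw [h4]
    exact h2.isCompact.image continuous_subtype_val
  -- An idempotent `w` with `w·(e·f) = w`
  obtain ⟨w, ⟨hwK, hwb⟩, hww⟩ := my_exists_idem S hScpt hSne mul
    (fun x hx y hy => ⟨hmem _ hx.1 _ hy.1, by rw [hassoc _ hx.1 _ hy.1 _ hbK, hy.2]⟩)
    (fun x hx y hy z hz => hassoc _ hx.1 _ hy.1 _ hz.1)
    (fun b' hb' => (hcont b' (hSsub hb')).mono hSsub)
  -- Now do the algebra in the semigroup `↥K`
  letI : Semigroup K :=
    { mul := fun a b => ⟨mul a b, hmem _ a.2 _ b.2⟩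
      mul_assoc := fun a b c => Subtype.ext (hassoc _ a.2 _ b.2 _ c.2) }
  set eK : K := ⟨e, heK⟩ with heK_def
  set fK : K := ⟨f, hfK⟩ with hfK_def
  set wK : K := ⟨w, hwK⟩ with hwK_def
  have hee : eK * eK = eK := Subtype.ext he
  have hwwK : wK * wK = wK := Subtype.ext hww
  have hwbK : wK * (eK * fK) = wK := Subtype.ext hwb
  have key : ∀ X : K, wK * (eK * (fK * X)) = wK * X := by
    intro X
    calc wK * (eK * (fK * X)) = (wK * (eK * fK)) * X := by rw [mul_assoc, mul_assoc]
      _ = wK * X := by rw [hwbK]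
  set w' : K := fK * (wK * eK) with hw'_def
  have hw'idem : w' * w' = w' := by
    calc w' * w' = fK * (wK * (eK * (fK * (wK * eK)))) := by
          rw [hw'_def]; simp only [mul_assoc]
      _ = fK * (wK * (wK * eK)) := by rw [key]
      _ = fK * ((wK * wK) * eK) := by rw [← mul_assoc wK wK eK]
      _ = fK * (wK * eK) := by rw [hwwK]
      _ = w' := hw'_def.symm
  have hw'e : w' * eK = w' := by
    calc w' * eK = fK * (wK * (eK * eK)) := by rw [hw'_def]; simp only [mul_assoc]
      _ = fK * (wK * eK) := by rw [hee]
      _ = w' := hw'_def.symm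
  have hgg : (eK * w') * (eK * w') = eK * w' := by
    calc (eK * w') * (eK * w') = eK * ((w' * eK) * w') := by simp only [mul_assoc]
      _ = eK * (w' * w') := by rw [hw'e]
      _ = eK * w' := by rw [hw'idem]
  have hge : (eK * w') * eK = eK * w' := by rw [mul_assoc, hw'e]
  have heg : eK * (eK * w') = eK * w' := by rw [← mul_assoc, hee]
  have hA : eK * w' = eK := by
    apply Subtype.ext
    exact hemin (eK * w').1 (eK * w').2 (congrArg Subtype.val hgg)
      (congrArg Subtype.val hge) (congrArg Subtype.val heg)
  have hfinal : eK * (fK * eK) = eK := by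
    calc eK * (fK * eK) = (eK * w') * (fK * eK) := by rw [hA]
      _ = eK * (fK * (wK * (eK * (fK * eK)))) := by rw [hw'_def]; simp only [mul_assoc]
      _ = eK * (fK * (wK * eK)) := by rw [key]
      _ = eK * w' := by rw [hw'_def]
      _ = eK := hA
  rw [hassoc e heK f hfK e heK]
  exact congrArg Subtype.val hfinal

end Aux

/-- In a compact convex semigroup, if `e` and `f` are two minimal idempotents, then
`e·f·e = e` and `f·e·f = f`. -/
theorem compact_convex_semigroup_two_minimal_idempotents
    {E : Type*} [AddCommGroup E] [Module ℝ E] [TopologicalSpace E]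
    [IsTopologicalAddGroup E] [ContinuousSMul ℝ E] [T2Space E] [LocallyConvexSpace ℝ E]
    (K : Set E) (hKcpt : IsCompact K) (hKconv : Convex ℝ K) (hKne : K.Nonempty)
    (mul : E → E → E)
    (hmem : ∀ a ∈ K, ∀ b ∈ K, mul a b ∈ K)
    (hassoc : ∀ a ∈ K, ∀ b ∈ K, ∀ c ∈ K, mul (mul a b) c = mul a (mul b c))
    (hcont : ∀ b ∈ K, ContinuousOn (fun a => mul a b) K)
    (haffine : ∀ t ∈ Set.Icc (0:ℝ) 1, ∀ a ∈ K, ∀ a' ∈ K, ∀ b ∈ K,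
      mul (t • a + (1 - t) • a') b = t • mul a b + (1 - t) • mul a' b)
    (e : E) (heK : e ∈ K) (he : mul e e = e)
    (hemin : ∀ g ∈ K, mul g g = g → mul g e = g → mul e g = g → g = e)
    (f : E) (hfK : f ∈ K) (hf : mul f f = f)
    (hfmin : ∀ g ∈ K, mul g g = g → mul g f = g → mul f g = g → g = f) :
    mul (mul e f) e = e ∧ mul (mul f e) f = f :=
  ⟨my_main_aux K hKcpt hKconv hKne mul hmem hassoc hcont haffine e heK he hemin f hfK,
   my_main_aux K hKcpt hKconv hKne mul hmem hassoc hcont haffine f hfK hf hfmin e heK⟩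
end

section
/- Let K be a compact convex semigroup, let e ∈ K be a minimal idempotent, and let x ∈ K. Then e·x is again a minimal idempotent of K. -/
open Set

/-- A continuous affine self-map of a nonempty compact convex subset of a locally convex
space has a fixed point (Markov–Kakutani for a single map). -/
theorem affine_cpt_cvx_fixed_point
    {E : Type*} [AddCommGroup E] [Module ℝ E] [TopologicalSpace E]
    [IsTopologicalAddGroup E] [ContinuousSMul ℝ E] [T2Space E] [LocallyConvexSpace ℝ E]
    (K : Set E) (hKcpt : IsCompact K) (hKconv : Convex ℝ K) (hKne : K.Nonempty)
    (f : E → E) (hfc : ContinuousOn f K) (hmaps : ∀ d ∈ K, f d ∈ K)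
    (haff : ∀ t ∈ Set.Icc (0:ℝ) 1, ∀ a ∈ K, ∀ a' ∈ K,
      f (t • a + (1 - t) • a') = t • f a + (1 - t) • f a') :
    ∃ b ∈ K, f b = b := by
  set S : Set (Set E) :=
    {N | N ⊆ K ∧ N.Nonempty ∧ IsCompact N ∧ Convex ℝ N ∧ ∀ d ∈ N, f d ∈ N} with hS
  have hKS : K ∈ S := ⟨subset_rfl, hKne, hKcpt, hKconv, hmaps⟩
  obtain ⟨N, -, hNmin⟩ : ∃ N, N ⊆ K ∧ Minimal (· ∈ S) N := by
    apply zorn_superset_nonempty S ?_ K hKS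
    intro c hcS hchain hcne
    haveI : Nonempty c := hcne.coe_sort
    obtain ⟨t0, ht0⟩ := hcne
    refine ⟨⋂₀ c, ⟨(sInter_subset_of_mem ht0).trans (hcS ht0).1, ?_, ?_, ?_, ?_⟩,
      fun s hs => sInter_subset_of_mem hs⟩
    · rw [sInter_eq_iInter]
      exact IsCompact.nonempty_iInter_of_directed_nonempty_isCompact_isClosed
        (fun i : c => (i : Set E))
        (DirectedOn.directed_val (IsChain.directedOn hchain.symm))
        (fun i => (hcS i.2).2.1) (fun i => (hcS i.2).2.2.1)
        (fun i => (hcS i.2).2.2.1.isClosed)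
    · exact ((hcS ht0).2.2.1).of_isClosed_subset
        (isClosed_sInter fun t ht => (hcS ht).2.2.1.isClosed) (sInter_subset_of_mem ht0)
    · exact convex_sInter fun t ht => (hcS ht).2.2.2.1
    · exact fun d hd => mem_sInter.2 fun t ht => (hcS ht).2.2.2.2 d (mem_sInter.1 hd t ht)
  obtain ⟨hNK, hNne, hNcpt, hNconv, hNinv⟩ := hNmin.1
  set g : E → E := fun d => (2⁻¹:ℝ) • d + (2⁻¹:ℝ) • f d with hg
  have hgN : ∀ d ∈ N, g d ∈ N := fun d hd =>
    hNconv hd (hNinv d hd) (by norm_num) (by norm_num) (by norm_num)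
  have hGN : g '' N ⊆ N := by rintro _ ⟨d, hd, rfl⟩; exact hgN d hd
  have hGS : g '' N ∈ S := by
    refine ⟨hGN.trans hNK, hNne.image g, ?_, ?_, ?_⟩
    · refine hNcpt.image_of_continuousOn ?_
      exact (continuousOn_id.const_smul (2⁻¹:ℝ)).add ((hfc.mono hNK).const_smul (2⁻¹:ℝ))
    · rintro _ ⟨a, ha, rfl⟩ _ ⟨b, hb, rfl⟩ t u ht hu htu
      have hu' : u = 1 - t := by linarith
      subst hu'
      refine ⟨t • a + (1 - t) • b, hNconv ha hb ht hu htu, ?_⟩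
      have := haff t ⟨ht, by linarith⟩ a (hNK ha) b (hNK hb)
      simp only [hg]
      rw [this]
      module
    · rintro _ ⟨d, hd, rfl⟩
      refine ⟨f d, hNinv d hd, ?_⟩
      have := haff (2⁻¹:ℝ) (by norm_num) d (hNK hd) (f d) (hNK (hNinv d hd))
      simp only [hg]
      rw [show (1 - 2⁻¹ : ℝ) = 2⁻¹ by norm_num] at this
      exact this.symm
  have hGeqN : g '' N = N := subset_antisymm hGN (hNmin.2 hGS hGN)
  obtain ⟨y, hyN, hyext⟩ := hNcpt.extremePoints_nonempty hNne
  obtain ⟨d, hd, hgd⟩ : y ∈ g '' N := hGeqN.symm ▸ hyN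
  have hseg : y ∈ openSegment ℝ d (f d) :=
    ⟨2⁻¹, 2⁻¹, by norm_num, by norm_num, by norm_num, hgd⟩
  obtain ⟨h1, h2⟩ := (mem_extremePoints.1 ⟨hyN, hyext⟩).2 d hd (f d) (hNinv d hd) hseg
  refine ⟨y, hNK hyN, ?_⟩
  exact h1 ▸ h2

/-- In a compact convex semigroup, if `e` is a minimal idempotent and `x ∈ K`, then `e·x`
is again a minimal idempotent of `K`. -/
theorem compact_convex_semigroup_minimal_idempotent_mul
    {E : Type*} [AddCommGroup E] [Module ℝ E] [TopologicalSpace E]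
    [IsTopologicalAddGroup E] [ContinuousSMul ℝ E] [T2Space E] [LocallyConvexSpace ℝ E]
    (K : Set E) (hKcpt : IsCompact K) (hKconv : Convex ℝ K) (hKne : K.Nonempty)
    (mul : E → E → E)
    (hmem : ∀ a ∈ K, ∀ b ∈ K, mul a b ∈ K)
    (hassoc : ∀ a ∈ K, ∀ b ∈ K, ∀ c ∈ K, mul (mul a b) c = mul a (mul b c))
    (hcont : ∀ b ∈ K, ContinuousOn (fun a => mul a b) K)
    (haffine : ∀ t ∈ Set.Icc (0:ℝ) 1, ∀ a ∈ K, ∀ a' ∈ K, ∀ b ∈ K,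
      mul (t • a + (1 - t) • a') b = t • mul a b + (1 - t) • mul a' b)
    (e : E) (heK : e ∈ K) (he : mul e e = e)
    (hemin : ∀ g ∈ K, mul g g = g → mul g e = g → mul e g = g → g = e)
    (x : E) (hxK : x ∈ K) :
    mul e x ∈ K ∧ mul (mul e x) (mul e x) = mul e x ∧
      ∀ g ∈ K, mul g g = g → mul g (mul e x) = g → mul (mul e x) g = g → g = mul e x := by
  haveI : CompactSpace {a // a ∈ K} := isCompact_iff_compactSpace.mp hKcpt
  letI instSG : Semigroup {a // a ∈ K} :=
    { mul := fun p q => ⟨mul p.1 q.1, hmem _ p.2 _ q.2⟩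
      mul_assoc := fun p q r => Subtype.ext (hassoc _ p.2 _ q.2 _ r.2) }
  have hcml : ∀ r : {a // a ∈ K}, Continuous (· * r) := fun r =>
    ((hcont r.1 r.2).restrict).subtype_mk _
  -- every nonempty compact subsemigroup of K contains an idempotent
  have idem : ∀ M : Set E, M.Nonempty → IsCompact M → M ⊆ K →
      (∀ a ∈ M, ∀ b ∈ M, mul a b ∈ M) → ∃ f ∈ M, mul f f = f := by
    intro M hMne hMcpt hMK hMmul
    have hMc : IsCompact (Subtype.val ⁻¹' M : Set {a // a ∈ K}) :=
      (hMcpt.isClosed.preimage continuous_subtype_val).isCompact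
    obtain ⟨m, hmM, hm⟩ := exists_idempotent_in_compact_subsemigroup hcml
      (Subtype.val ⁻¹' M) ⟨⟨hMne.choose, hMK hMne.choose_spec⟩, hMne.choose_spec⟩ hMc
      (fun a ha b hb => hMmul _ ha _ hb)
    exact ⟨m.1, hmM, congrArg Subtype.val hm⟩
  -- the fixed set of right translation by s is compact
  have fixcpt : ∀ s ∈ K, IsCompact {w ∈ K | mul w s = w} := by
    intro s hs
    have h2 : IsClosed {a : {a // a ∈ K} | mul a.1 s = a.1} :=
      isClosed_eq (hcont s hs).restrict continuous_subtype_val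
    have h3 : IsCompact (Subtype.val '' {a : {a // a ∈ K} | mul a.1 s = a.1}) :=
      h2.isCompact.image continuous_subtype_val
    convert h3 using 1
    ext w
    constructor
    · rintro ⟨hwK, hw⟩; exact ⟨⟨w, hwK⟩, hw, rfl⟩
    · rintro ⟨a, ha, rfl⟩; exact ⟨a.2, ha⟩
  -- core: e · a · e = e for all a ∈ K
  have core : ∀ a ∈ K, mul (mul e a) e = e := by
    intro a haK
    have heaK : mul e a ∈ K := hmem _ heK _ haK
    have hsK : mul (mul e a) e ∈ K := hmem _ heaK _ heK
    have hse : mul (mul (mul e a) e) e = mul (mul e a) e := by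
      rw [hassoc _ heaK _ heK _ heK, he]
    have hes : mul e (mul (mul e a) e) = mul (mul e a) e := by
      rw [← hassoc _ heK _ heaK _ heK, ← hassoc _ heK _ heK _ haK, he]
    obtain ⟨b, hbK, hbs⟩ := affine_cpt_cvx_fixed_point K hKcpt hKconv hKne
      (fun w => mul w (mul (mul e a) e)) (hcont _ hsK) (fun d hd => hmem _ hd _ hsK)
      (fun t ht p hp q hq => haffine t ht p hp q hq _ hsK)
    obtain ⟨f, hfM, hff⟩ := idem {w ∈ K | mul w (mul (mul e a) e) = w} ⟨b, hbK, hbs⟩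
      (fixcpt _ hsK) (fun w hw => hw.1)
      (fun p hp q hq => ⟨hmem _ hp.1 _ hq.1, by rw [hassoc _ hp.1 _ hq.1 _ hsK, hq.2]⟩)
    obtain ⟨hfK, hfs⟩ := hfM
    have hfe : mul f e = f := by
      rw [← hfs, hassoc _ hfK _ hsK _ heK, hse]
    have hefK : mul e f ∈ K := hmem _ heK _ hfK
    have hefe : mul (mul e f) e = mul e f := by rw [hassoc _ heK _ hfK _ heK, hfe]
    have h1 : mul (mul e f) (mul e f) = mul e f := by
      rw [← hassoc _ hefK _ heK _ hfK, hefe, hassoc _ heK _ hfK _ hfK, hff]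
    have heef : mul e (mul e f) = mul e f := by rw [← hassoc _ heK _ heK _ hfK, he]
    have hef_eq_e : mul e f = e := hemin _ hefK h1 hefe heef
    calc mul (mul e a) e = mul e (mul (mul e a) e) := hes.symm
      _ = mul (mul e f) (mul (mul e a) e) := by rw [hef_eq_e]
      _ = mul e (mul f (mul (mul e a) e)) := hassoc _ heK _ hfK _ hsK
      _ = mul e f := by rw [hfs]
      _ = e := hef_eq_e
  have hexK : mul e x ∈ K := hmem _ heK _ hxK
  refine ⟨hexK, ?_, ?_⟩
  · rw [← hassoc _ hexK _ heK _ hxK, core x hxK]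
  · intro g hgK hgg hg1 hg2
    have hxgK : mul x g ∈ K := hmem _ hxK _ hgK
    have hg2' : mul e (mul x g) = g := by rw [← hassoc _ heK _ hxK _ hgK]; exact hg2
    have heg : mul e g = g := by
      conv_lhs => rw [← hg2', ← hassoc _ heK _ heK _ hxgK, he]
      exact hg2'
    have hgeK : mul g e ∈ K := hmem _ hgK _ heK
    have hgeg : mul (mul g e) g = mul g g := by rw [hassoc _ hgK _ heK _ hgK, heg]
    have hh1 : mul (mul g e) (mul g e) = mul g e := by
      rw [← hassoc _ hgeK _ hgK _ heK, hgeg, hgg]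
    have hh2 : mul (mul g e) e = mul g e := by rw [hassoc _ hgK _ heK _ heK, he]
    have hh3 : mul e (mul g e) = mul g e := by rw [← hassoc _ heK _ hgK _ heK, heg]
    have hge_e : mul g e = e := hemin _ hgeK hh1 hh2 hh3
    calc g = mul g (mul e x) := hg1.symm
      _ = mul (mul g e) x := (hassoc _ hgK _ heK _ hxK).symm
      _ = mul e x := by rw [hge_e]
end

section
/- Let A be a unital C*-algebra and let Φ : A → A be a unital positive linear map satisfying the Schwarz inequality Φ(x)*Φ(x) ≤ Φ(x*x) for all x ∈ A. Suppose Φ is idempotent (Φ ∘ Φ = Φ) and faithful (Φ(x*x) = 0 implies x = 0). Then for every x in the range of Φ one has Φ(x*x) = x*x; in particular x*x belongs to the range of Φ. -/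
/-- If `Φ` is a unital positive linear map on a unital C*-algebra satisfying the Schwarz
inequality which is idempotent and faithful, then `Φ(x*x) = x*x` for every `x` in the range
of `Φ`; in particular `x*x` belongs to the range of `Φ`. -/
theorem range_of_faithful_idempotent_schwarz_map_closed_under_star_mul_self
    {A : Type*} [NormedRing A] [StarRing A] [CStarRing A]
    [NormedAlgebra ℂ A] [CompleteSpace A] [StarModule ℂ A]
    [PartialOrder A] [StarOrderedRing A]
    (Φ : A →ₗ[ℂ] A)
    (hunital : Φ 1 = 1)
    (hpos : ∀ a : A, 0 ≤ a → 0 ≤ Φ a)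
    (hschwarz : ∀ x : A, star (Φ x) * Φ x ≤ Φ (star x * x))
    (hidem : ∀ x : A, Φ (Φ x) = Φ x)
    (hfaithful : ∀ x : A, Φ (star x * x) = 0 → x = 0) :
    ∀ x ∈ Set.range Φ, Φ (star x * x) = star x * x ∧ star x * x ∈ Set.range Φ := by
  letI : CStarAlgebra A := CStarAlgebra.mk
  intro x hx
  obtain ⟨y, rfl⟩ := hx
  have hfix : Φ (Φ y) = Φ y := hidem y
  set x := Φ y with hxdef
  have hle : star x * x ≤ Φ (star x * x) := by
    have := hschwarz x
    rwa [hfix] at this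
  set d := Φ (star x * x) - star x * x with hd
  have hdnn : 0 ≤ d := sub_nonneg.mpr hle
  have hΦd : Φ d = 0 := by
    rw [hd, map_sub, hidem, sub_self]
  have hsd : star (CFC.sqrt d) * CFC.sqrt d = d := by
    rw [(IsSelfAdjoint.of_nonneg (CFC.sqrt_nonneg d)).star_eq, CFC.sqrt_mul_sqrt_self d hdnn]
  have : CFC.sqrt d = 0 := hfaithful _ (by rw [hsd, hΦd])
  have hdz : d = 0 := by rw [← hsd, this]; simp
  have h1 : Φ (star x * x) = star x * x := sub_eq_zero.mp hdz
  exact ⟨h1, ⟨star x * x, by rw [← h1, hidem]⟩⟩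
end

section
/- Let A be a unital C*-algebra and let Φ : A → A be a unital positive linear map satisfying the Schwarz inequality Φ(x)*Φ(x) ≤ Φ(x*x) for all x ∈ A. Suppose Φ is idempotent (Φ ∘ Φ = Φ) and faithful (Φ(x*x) = 0 implies x = 0). Then the range of Φ is a unital *-subalgebra of A: it is a linear subspace containing 1, closed under the adjoint operation, and closed under multiplication. -/
/-- Polarization identity used to express `star v * u` via elements of the form
`star z * z`. -/
private lemma polar_aux {A : Type*} [NormedRing A]
    [NormedAlgebra ℂ A] [StarRing A] [StarModule ℂ A] (u v : A) :
    star v * u = (4⁻¹ : ℂ) • (star (u + v) * (u + v)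
      + Complex.I • (star (u + Complex.I • v) * (u + Complex.I • v))
      - (star (u - v) * (u - v))
      - Complex.I • (star (u - Complex.I • v) * (u - Complex.I • v))) := by
  simp only [star_add, star_sub, star_smul, Complex.star_def, Complex.conj_I,
    mul_add, add_mul, mul_sub, sub_mul, smul_add, smul_sub, smul_smul, neg_smul,
    neg_mul, smul_mul_assoc, mul_smul_comm]
  match_scalars <;> simp [Complex.ext_iff] <;> ring

/-- If `Φ` is a unital positive linear map on a unital C*-algebra satisfying the Schwarz
inequality which is idempotent and faithful, then the range of `Φ` is a unital
*-subalgebra of `A`: a linear subspace containing `1`, closed under adjoints and under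
multiplication. -/
theorem range_of_faithful_idempotent_schwarz_map_is_star_subalgebra
    {A : Type*} [NormedRing A] [StarRing A] [CStarRing A]
    [NormedAlgebra ℂ A] [CompleteSpace A] [StarModule ℂ A]
    [PartialOrder A] [StarOrderedRing A]
    (Φ : A →ₗ[ℂ] A)
    (hunital : Φ 1 = 1)
    (hpos : ∀ a : A, 0 ≤ a → 0 ≤ Φ a)
    (hschwarz : ∀ x : A, star (Φ x) * Φ x ≤ Φ (star x * x))
    (hidem : ∀ x : A, Φ (Φ x) = Φ x)
    (hfaithful : ∀ x : A, Φ (star x * x) = 0 → x = 0) :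
    (1 : A) ∈ Set.range Φ ∧
    (∀ x ∈ Set.range Φ, ∀ y ∈ Set.range Φ, x + y ∈ Set.range Φ) ∧
    (∀ (c : ℂ), ∀ x ∈ Set.range Φ, c • x ∈ Set.range Φ) ∧
    (∀ x ∈ Set.range Φ, star x ∈ Set.range Φ) ∧
    (∀ x ∈ Set.range Φ, ∀ y ∈ Set.range Φ, x * y ∈ Set.range Φ) := by
  letI : CStarAlgebra A := ⟨⟩
  -- every range element is a fixed point
  have hfix : ∀ x ∈ Set.range Φ, Φ x = x := by
    rintro x ⟨a, rfl⟩; exact hidem a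
  -- Φ maps selfadjoint elements to selfadjoint elements
  have hsa : ∀ h : A, IsSelfAdjoint h → IsSelfAdjoint (Φ h) := by
    intro h hh
    rw [← CFC.posPart_sub_negPart h hh, map_sub]
    exact (IsSelfAdjoint.of_nonneg (hpos _ (CFC.posPart_nonneg h))).sub
      (IsSelfAdjoint.of_nonneg (hpos _ (CFC.negPart_nonneg h)))
  -- Φ is star-preserving
  have hstar : ∀ a : A, Φ (star a) = star (Φ a) := by
    intro a
    have hr : IsSelfAdjoint ((realPart a : A)) := (realPart a).2
    have hi : IsSelfAdjoint ((imaginaryPart a : A)) := (imaginaryPart a).2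
    have h1 := hsa _ hr
    have h2 := hsa _ hi
    have key := realPart_add_I_smul_imaginaryPart a
    calc Φ (star a) = Φ ((realPart a : A)) - Complex.I • Φ ((imaginaryPart a : A)) := by
          conv_lhs => rw [← key]
          rw [star_add, star_smul, map_add, map_smul, hr.star_eq, hi.star_eq,
            Complex.star_def, Complex.conj_I, neg_smul, sub_eq_add_neg]
      _ = star (Φ a) := by
          conv_rhs => rw [← key]
          rw [map_add, map_smul, star_add, star_smul, h1.star_eq, h2.star_eq,
            Complex.star_def, Complex.conj_I, neg_smul, sub_eq_add_neg]
  -- key step: if x is a fixed point, so is star x * x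
  have hkey : ∀ x : A, Φ x = x → Φ (star x * x) = star x * x := by
    intro x hx
    set d : A := Φ (star x * x) - star x * x with hd
    have hd0 : 0 ≤ d := by
      have h := hschwarz x
      rw [hx] at h
      exact sub_nonneg.mpr h
    have hΦd : Φ d = 0 := by
      rw [hd, map_sub, hidem, sub_self]
    have hdz : d = 0 := by
      have hsq0 : (0 : A) ≤ CFC.sqrt d := CFC.sqrt_nonneg d
      have hsm : CFC.sqrt d * CFC.sqrt d = d := CFC.sqrt_mul_sqrt_self d hd0
      have : Φ (star (CFC.sqrt d) * CFC.sqrt d) = 0 := by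
        rw [(IsSelfAdjoint.of_nonneg hsq0).star_eq, hsm, hΦd]
      have hz := hfaithful _ this
      rw [← hsm, hz, mul_zero]
    have := sub_eq_zero.mp (hd ▸ hdz)
    exact this
  -- fixed points are closed under x, y ↦ star x * y
  have hmulstar : ∀ x y : A, Φ x = x → Φ y = y → Φ (star x * y) = star x * y := by
    intro x y hx hy
    have e := polar_aux y x
    have f1 : Φ (y + x) = y + x := by rw [map_add, hx, hy]
    have f2 : Φ (y + Complex.I • x) = y + Complex.I • x := by
      rw [map_add, map_smul, hx, hy]
    have f3 : Φ (y - x) = y - x := by rw [map_sub, hx, hy]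
    have f4 : Φ (y - Complex.I • x) = y - Complex.I • x := by
      rw [map_sub, map_smul, hx, hy]
    rw [e, map_smul, map_sub, map_sub, map_add, map_smul, map_smul,
      hkey _ f1, hkey _ f2, hkey _ f3, hkey _ f4]
  refine ⟨⟨1, hunital⟩, ?_, ?_, ?_, ?_⟩
  · rintro x ⟨a, rfl⟩ y ⟨b, rfl⟩
    exact ⟨a + b, map_add Φ a b⟩
  · rintro c x ⟨a, rfl⟩
    exact ⟨c • a, map_smul Φ c a⟩
  · rintro x hx
    exact ⟨star x, by rw [hstar, hfix x hx]⟩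
  · rintro x hx y hy
    have hsx : Φ (star x) = star x := by rw [hstar, hfix x hx]
    have h := hmulstar (star x) y hsx (hfix y hy)
    rw [star_star] at h
    exact ⟨x * y, h⟩
end

section
/- Let A be a unital C*-algebra, let Φ, Ψ : A → A be unital positive linear maps each satisfying the Schwarz inequality, and suppose Φ is faithful. Let u ∈ A be a unitary such that Φ(x·u) = Φ(x)·u and Φ(u*·x) = u*·Φ(x) for all x ∈ A. If Φ(Ψ(u)) = u, then Ψ(u) = u. -/
/-- Let `Φ, Ψ` be unital positive linear maps on a unital C*-algebra satisfying the Schwarz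
inequality, with `Φ` faithful. If `u` is a unitary such that `Φ(x·u) = Φ(x)·u` and
`Φ(u*·x) = u*·Φ(x)` for all `x`, and `Φ(Ψ(u)) = u`, then `Ψ(u) = u`. -/
theorem faithful_schwarz_map_fixes_unitary
    {A : Type*} [NormedRing A] [StarRing A] [CStarRing A]
    [NormedAlgebra ℂ A] [CompleteSpace A] [StarModule ℂ A]
    [PartialOrder A] [StarOrderedRing A]
    (Φ Ψ : A →ₗ[ℂ] A)
    (hΦunital : Φ 1 = 1)
    (hΦpos : ∀ a : A, 0 ≤ a → 0 ≤ Φ a)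
    (hΦschwarz : ∀ x : A, star (Φ x) * Φ x ≤ Φ (star x * x))
    (hΨunital : Ψ 1 = 1)
    (hΨpos : ∀ a : A, 0 ≤ a → 0 ≤ Ψ a)
    (hΨschwarz : ∀ x : A, star (Ψ x) * Ψ x ≤ Ψ (star x * x))
    (hΦfaithful : ∀ x : A, Φ (star x * x) = 0 → x = 0)
    (u : A) (hu₁ : star u * u = 1) (hu₂ : u * star u = 1)
    (hbimod₁ : ∀ x : A, Φ (x * u) = Φ x * u)
    (hbimod₂ : ∀ x : A, Φ (star u * x) = star u * Φ x)
    (hfix : Φ (Ψ u) = u) :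
    Ψ u = u := by
  letI : CStarAlgebra A := { }
  -- Φ preserves selfadjoint elements
  have hsa : ∀ a : A, IsSelfAdjoint a → IsSelfAdjoint (Φ a) := by
    intro a ha
    have hdecomp := CFC.posPart_sub_negPart a ha
    have h1 : Φ a = Φ a⁺ - Φ a⁻ := by rw [← map_sub, hdecomp]
    rw [h1]
    exact ((hΦpos _ (CFC.posPart_nonneg a)).isSelfAdjoint).sub
      ((hΦpos _ (CFC.negPart_nonneg a)).isSelfAdjoint)
  -- Φ preserves star
  have hstar : ∀ x : A, Φ (star x) = star (Φ x) := by
    intro x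
    have hre : IsSelfAdjoint (x + star x) := by
      simp only [IsSelfAdjoint, star_add, star_star, add_comm]
    have him : IsSelfAdjoint (Complex.I • (star x - x)) := by
      simp only [IsSelfAdjoint, star_smul, star_sub, star_star, Complex.star_def,
        Complex.conj_I, neg_smul, smul_sub, neg_sub]
      module
    have h1 := (hsa _ hre).star_eq
    have h2 := (hsa _ him).star_eq
    rw [map_add, star_add] at h1
    rw [map_smul, star_smul, Complex.star_def, Complex.conj_I, map_sub, star_sub] at h2
    -- h1 : star (Φ x) + star (Φ (star x)) = Φ x + Φ (star x)
    -- h2 : -I • (star (Φ (star x)) - star (Φ x)) = I • (Φ (star x) - Φ x)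
    have h2' : star (Φ x) - star (Φ (star x)) = Φ (star x) - Φ x := by
      apply smul_right_injective A Complex.I_ne_zero
      linear_combination (norm := module) h2
    have h3 : (2 : ℂ) • star (Φ x) = (2 : ℂ) • Φ (star x) := by
      linear_combination (norm := module) h1 + h2'
    exact (smul_right_injective A (two_ne_zero (α := ℂ)) h3).symm
  have hmono : ∀ a b : A, a ≤ b → Φ a ≤ Φ b := by
    intro a b hab
    have := hΦpos _ (sub_nonneg.mpr hab)
    rw [map_sub] at this
    exact sub_nonneg.mp this
  set v := Ψ u with hv
  set x := v - u with hx
  have e1 : Φ (star v * u) = 1 := by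
    rw [hbimod₁, hstar, hfix, hu₁]
  have e2 : Φ (star u * v) = 1 := by
    rw [hbimod₂, hfix, hu₁]
  have key : Φ (star x * x) = Φ (star v * v) - 1 := by
    have hexp : star x * x = star v * v - star v * u - star u * v + star u * u := by
      rw [hx, star_sub]; noncomm_ring
    rw [hexp, map_add, map_sub, map_sub, e1, e2, hu₁, hΦunital]
    abel
  have hle : Φ (star v * v) ≤ 1 := by
    have h1 : star v * v ≤ 1 := by
      have := hΨschwarz u
      rwa [hu₁, hΨunital] at this
    have := hmono _ _ h1
    rwa [hΦunital] at this
  have hge : 0 ≤ Φ (star x * x) := hΦpos _ (star_mul_self_nonneg x)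
  have hzero : Φ (star x * x) = 0 := by
    rw [key] at hge ⊢
    exact le_antisymm (sub_nonpos.mpr hle) hge
  have hx0 := hΦfaithful _ hzero
  rw [hx, sub_eq_zero] at hx0
  exact hx0
end

section
/- Let A be a unital C*-algebra and let K be a set of unital positive linear maps A → A, each satisfying the Schwarz inequality, that is closed under composition. Let Φ ∈ K be faithful and satisfy Φ ∘ Ψ ∘ Φ = Φ for every Ψ ∈ K, and suppose Φ satisfies the bimodule property Φ(x·b) = Φ(x)·b and Φ(b·x) = b·Φ(x) for all x ∈ A and all b in the range of Φ. Then every unitary u belonging to the range of Φ is fixed by every element of K: Ψ(u) = u for all Ψ ∈ K. -/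
/-- Let `K` be a composition-closed set of unital positive linear maps (each satisfying the
Schwarz inequality) on a unital C*-algebra `A`. If `Φ ∈ K` is faithful, satisfies
`Φ ∘ Ψ ∘ Φ = Φ` for every `Ψ ∈ K`, and is a bimodule map over its range, then every unitary
in the range of `Φ` is fixed by every element of `K`. -/
theorem unitaries_in_range_fixed_by_semigroup
    {A : Type*} [NormedRing A] [StarRing A] [CStarRing A]
    [NormedAlgebra ℂ A] [CompleteSpace A] [StarModule ℂ A]
    [PartialOrder A] [StarOrderedRing A]
    (K : Set (A →ₗ[ℂ] A))
    (hK : ∀ Ψ ∈ K, Ψ 1 = 1 ∧ (∀ a : A, 0 ≤ a → 0 ≤ Ψ a) ∧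
      (∀ x : A, star (Ψ x) * Ψ x ≤ Ψ (star x * x)))
    (hKcomp : ∀ Φ ∈ K, ∀ Ψ ∈ K, Φ ∘ₗ Ψ ∈ K)
    (Φ : A →ₗ[ℂ] A) (hΦK : Φ ∈ K)
    (hΦfaithful : ∀ x : A, Φ (star x * x) = 0 → x = 0)
    (hΦmin : ∀ Ψ ∈ K, Φ ∘ₗ Ψ ∘ₗ Φ = Φ)
    (hbimod : ∀ x : A, ∀ b ∈ Set.range Φ, Φ (x * b) = Φ x * b ∧ Φ (b * x) = b * Φ x) :
    ∀ u ∈ Set.range Φ, star u * u = 1 → u * star u = 1 →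
      ∀ Ψ ∈ K, Ψ u = u := by
  open ComplexStarModule in
  letI : CStarAlgebra A := {}
  obtain ⟨hΦ1, hΦpos, hΦschwarz⟩ := hK Φ hΦK
  -- Φ is monotone
  have hmono : ∀ a b : A, a ≤ b → Φ a ≤ Φ b := by
    intro a b h
    have := hΦpos (b - a) (sub_nonneg.2 h)
    rw [map_sub] at this
    exact sub_nonneg.1 this
  -- Φ maps self-adjoint elements to self-adjoint elements
  have hsa : ∀ a : A, IsSelfAdjoint a → IsSelfAdjoint (Φ a) := by
    intro a ha
    have hc : Φ ((algebraMap ℝ A ‖a‖) + a) = (algebraMap ℝ A ‖a‖) + Φ a := by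
      have : (algebraMap ℝ A ‖a‖) = ((‖a‖ : ℂ)) • (1 : A) := by
        simp [Algebra.algebraMap_eq_smul_one]
      rw [this, map_add, map_smul, hΦ1]
    have hnn : (0 : A) ≤ (algebraMap ℝ A ‖a‖) + a := by
      have := ha.neg_algebraMap_norm_le_self
      simpa using add_le_add_right this (algebraMap ℝ A ‖a‖)
    have h1 : IsSelfAdjoint (Φ ((algebraMap ℝ A ‖a‖) + a)) :=
      IsSelfAdjoint.of_nonneg (hΦpos _ hnn)
    have h2 : IsSelfAdjoint (algebraMap ℝ A ‖a‖) := IsSelfAdjoint.algebraMap A (IsSelfAdjoint.all _)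
    have : Φ a = Φ ((algebraMap ℝ A ‖a‖) + a) - (algebraMap ℝ A ‖a‖) := by
      rw [hc]; abel
    rw [this]
    exact h1.sub h2
  -- Φ is star-preserving
  have hstar : ∀ x : A, Φ (star x) = star (Φ x) := by
    intro x
    have hdecomp : x = (ℜ x : A) + Complex.I • (ℑ x : A) :=
      (realPart_add_I_smul_imaginaryPart x).symm
    have hre : IsSelfAdjoint (Φ (ℜ x : A)) := hsa _ (ℜ x).2
    have him : IsSelfAdjoint (Φ (ℑ x : A)) := hsa _ (ℑ x).2
    calc Φ (star x) = Φ (star ((ℜ x : A) + Complex.I • (ℑ x : A))) := by rw [← hdecomp]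
      _ = Φ (ℜ x : A) - Complex.I • Φ (ℑ x : A) := by
          rw [star_add, star_smul, (ℜ x).2.star_eq, (ℑ x).2.star_eq]
          simp [map_add, map_smul, Complex.star_def, Complex.conj_I, sub_eq_add_neg,
            neg_smul]
      _ = star (Φ (ℜ x : A) + Complex.I • Φ (ℑ x : A)) := by
          rw [star_add, star_smul, hre.star_eq, him.star_eq]
          simp [Complex.star_def, Complex.conj_I, sub_eq_add_neg, neg_smul]
      _ = star (Φ ((ℜ x : A) + Complex.I • (ℑ x : A))) := by rw [map_add, map_smul]
      _ = star (Φ x) := by rw [← hdecomp]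
  -- main argument
  intro u hu hu1 hu2 Ψ hΨK
  obtain ⟨hΨ1, hΨpos, hΨschwarz⟩ := hK Ψ hΨK
  obtain ⟨v, hv⟩ := hu
  have hΦu : Φ u = u := by
    have := (hbimod 1 u ⟨v, hv⟩).1
    simpa [hΦ1] using this
  have hΦΨu : Φ (Ψ u) = u := by
    have := congrArg (fun f : A →ₗ[ℂ] A => f v) (hΦmin Ψ hΨK)
    simpa [hv] using this
  have hstarΨu : Φ (star (Ψ u)) = star u := by rw [hstar, hΦΨu]
  have h1 : Φ (star (Ψ u) * u) = 1 := by
    rw [(hbimod _ u ⟨v, hv⟩).1, hstarΨu, hu1]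
  have h2 : Φ (star u * Ψ u) = 1 := by
    have : star u * Ψ u = star (star (Ψ u) * u) := by
      rw [star_mul, star_star]
    rw [this, hstar, h1, star_one]
  have h3 : Φ (star (Ψ u) * Ψ u) ≤ 1 := by
    calc Φ (star (Ψ u) * Ψ u) ≤ Φ (Ψ (star u * u)) := hmono _ _ (hΨschwarz u)
      _ = 1 := by rw [hu1, hΨ1, hΦ1]
  set x := Ψ u - u with hx
  have hexpand : star x * x
      = star (Ψ u) * Ψ u - star (Ψ u) * u - star u * Ψ u + star u * u := by
    rw [hx, star_sub]
    noncomm_ring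
  have hΦxx : Φ (star x * x) = Φ (star (Ψ u) * Ψ u) - 1 := by
    rw [hexpand, map_add, map_sub, map_sub, h1, h2, hu1, hΦ1]
    abel
  have hle : Φ (star x * x) ≤ 0 := by
    rw [hΦxx]; exact sub_nonpos.2 h3
  have hge : (0 : A) ≤ Φ (star x * x) := hΦpos _ (star_mul_self_nonneg x)
  have hzero : x = 0 := hΦfaithful x (le_antisymm hle hge)
  have := sub_eq_zero.1 hzero
  exact this
end
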